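/- Layered-graph path correspondence: Given G with source s, levels Level(u) = d(s,u,G), and a sequence Y = (y_1,...,y_t) of positive integers, define the layered graph G_Y on t+1 copies V^0,...,V^t of V with: intra-layer edges (a^i,b^i) for each edge (a,b) of G with Level(b) − Level(a) = 1, and cross edges (a^{i−1}, b^i) for each edge (a,b) with 1 + Level(a) − Level(b) = y_i. Then for any vertex v and edge set F, there is an s-v path P in G−F with X^+(P) = Y if and only if there is a path from s^0 to v^t in G_Y minus all copies of edges of F. -/

import Mathlib

/-- `HasWalk E a b n` means there is a walk of length `n` from `a` to `b`. -/
inductive HasWalk {V : Type*} (E : V → V → Prop) : V → V → ℕ → Prop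
  | nil (a : V) : HasWalk E a a 0
  | cons {a b c : V} {n : ℕ} : E a b → HasWalk E b c n → HasWalk E a c (n + 1)

/-- A walk from `s` to `v`, given as its list of vertices. -/
def IsWalkFrom {V : Type*} (E : V → V → Prop) (s v : V) (p : List V) : Prop :=
  p.Chain' E ∧ p.head? = some s ∧ p.getLast? = some v

section Aux
variable {V : Type*}


lemma HasWalk.snoc {E : V → V → Prop} {s a b : V} {n : ℕ}
    (h : HasWalk E s a n) (hE : E a b) : HasWalk E s b (n + 1) := by
  induction h with
  | nil a => exact HasWalk.cons hE (HasWalk.nil b)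
  | cons h1 _ ih => exact HasWalk.cons h1 (ih hE)

inductive FWalk (R : V → V → Prop) (f : V → V → ℤ) : V → V → List ℤ → Prop
  | nil (a : V) : FWalk R f a a []
  | cons_eq {a b c : V} {l : List ℤ} : R a b → ¬ 0 < f a b → FWalk R f b c l → FWalk R f a c l
  | cons_pos {a b c : V} {l : List ℤ} : R a b → 0 < f a b → FWalk R f b c l →
      FWalk R f a c (f a b :: l)

lemma fwalk_iff (R : V → V → Prop) (f : V → V → ℤ) (s v : V) (L : List ℤ) :
    (∃ p : List V, IsWalkFrom R s v p ∧
      (((p.zip p.tail).map fun ab => f ab.1 ab.2).filter fun y => decide (0 < y)) = L)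
    ↔ FWalk R f s v L := by
  constructor
  · rintro ⟨p, ⟨hc, hh, hl⟩, hf⟩
    induction p generalizing s L with
    | nil => simp at hh
    | cons a p ih =>
      simp only [List.head?_cons, Option.some.injEq] at hh
      subst hh
      cases p with
      | nil =>
        simp only [List.getLast?_singleton, Option.some.injEq] at hl
        subst hl
        simp only [List.tail_cons, List.zip_nil_right, List.map_nil, List.filter_nil] at hf
        subst hf
        exact FWalk.nil _
      | cons b rest =>
        rw [List.Chain', List.isChain_cons_cons] at hc
        rw [List.getLast?_cons_cons] at hl
        simp only [List.zip_cons_cons, List.tail_cons, List.map_cons, List.filter_cons] at hf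
        by_cases hpos : 0 < f a b
        · rw [if_pos (by simpa using hpos)] at hf
          subst hf
          exact FWalk.cons_pos hc.1 hpos (ih _ _ rfl hc.2 rfl hl)
        · rw [if_neg (by simpa using hpos)] at hf
          exact FWalk.cons_eq hc.1 hpos (ih _ _ hf hc.2 rfl hl)
  · intro h
    induction h with
    | nil a => exact ⟨[a], ⟨List.isChain_singleton _, rfl, rfl⟩, by simp⟩
    | cons_eq hR hpos _ ih =>
      obtain ⟨p, ⟨hc, hh, hl⟩, hf⟩ := ih
      cases p with
      | nil => simp at hh
      | cons b rest =>
        simp only [List.head?_cons, Option.some.injEq] at hh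
        subst hh
        refine ⟨_ :: b :: rest, ⟨List.isChain_cons_cons.mpr ⟨hR, hc⟩, rfl,
          by rw [List.getLast?_cons_cons]; exact hl⟩, ?_⟩
        simp only [List.zip_cons_cons, List.tail_cons, List.map_cons, List.filter_cons]
        rw [if_neg (by simpa using hpos)]
        exact hf
    | cons_pos hR hpos _ ih =>
      obtain ⟨p, ⟨hc, hh, hl⟩, hf⟩ := ih
      cases p with
      | nil => simp at hh
      | cons b rest =>
        simp only [List.head?_cons, Option.some.injEq] at hh
        subst hh
        refine ⟨_ :: b :: rest, ⟨List.isChain_cons_cons.mpr ⟨hR, hc⟩, rfl,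
          by rw [List.getLast?_cons_cons]; exact hl⟩, ?_⟩
        simp only [List.zip_cons_cons, List.tail_cons, List.map_cons, List.filter_cons]
        rw [if_pos (by simpa using hpos)]
        exact congrArg (List.cons _) hf

lemma exists_isWalkFrom_iff {α : Type*} (R : α → α → Prop) (s v : α) :
    (∃ q : List α, IsWalkFrom R s v q) ↔ Relation.ReflTransGen R s v := by
  constructor
  · rintro ⟨q, hc, hh, hl⟩
    induction q generalizing s with
    | nil => simp at hh
    | cons a q ih =>
      simp only [List.head?_cons, Option.some.injEq] at hh
      subst hh
      cases q with
      | nil =>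
        simp only [List.getLast?_singleton, Option.some.injEq] at hl
        subst hl
        exact Relation.ReflTransGen.refl
      | cons b rest =>
        rw [List.Chain', List.isChain_cons_cons] at hc
        rw [List.getLast?_cons_cons] at hl
        exact Relation.ReflTransGen.head hc.1 (ih _ hc.2 rfl hl)
  · intro h
    induction h using Relation.ReflTransGen.head_induction_on with
    | refl => exact ⟨[v], List.isChain_singleton _, rfl, rfl⟩
    | head hR _ ih =>
      obtain ⟨q, hc, hh, hl⟩ := ih
      cases q with
      | nil => simp at hh
      | cons b rest =>
        simp only [List.head?_cons, Option.some.injEq] at hh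
        subst hh
        exact ⟨_ :: b :: rest, List.isChain_cons_cons.mpr ⟨hR, hc⟩, rfl,
          by rw [List.getLast?_cons_cons]; exact hl⟩

lemma layer_iff {E : V → V → Prop} {F : Set (V × V)} {s v : V} {Level : V → ℕ}
    (hLevel : ∀ u : V, IsLeast {n : ℕ | HasWalk E s u n} (Level u))
    (Y : List ℕ) (hY : ∀ y ∈ Y, 0 < y) (i : ℕ) (hi : i ≤ Y.length) (a : V) :
    FWalk (fun a b => E a b ∧ (a, b) ∉ F) (fun a b => 1 + (Level a : ℤ) - Level b)
      a v ((Y.drop i).map fun y : ℕ => (y : ℤ))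
    ↔ Relation.ReflTransGen (fun a b : V × ℕ =>
        ((a.2 = b.2 ∧ b.2 ≤ Y.length ∧ E a.1 b.1 ∧ Level b.1 = Level a.1 + 1) ∨
         (b.2 = a.2 + 1 ∧ E a.1 b.1 ∧ ∃ yi : ℕ, Y[a.2]? = some yi ∧
            1 + Level a.1 = Level b.1 + yi)) ∧ (a.1, b.1) ∉ F)
      (a, i) (v, Y.length) := by
  have hstep : ∀ a b : V, E a b → Level b ≤ Level a + 1 := fun a b hE =>
    (hLevel b).2 ((hLevel a).1.snoc hE)
  constructor
  · intro h
    have H : ∀ (a w : V) (L : List ℤ), FWalk (fun a b => E a b ∧ (a, b) ∉ F)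
        (fun a b => 1 + (Level a : ℤ) - Level b) a w L → ∀ i, i ≤ Y.length →
        L = (Y.drop i).map (fun y : ℕ => (y : ℤ)) →
        Relation.ReflTransGen (fun a b : V × ℕ =>
          ((a.2 = b.2 ∧ b.2 ≤ Y.length ∧ E a.1 b.1 ∧ Level b.1 = Level a.1 + 1) ∨
           (b.2 = a.2 + 1 ∧ E a.1 b.1 ∧ ∃ yi : ℕ, Y[a.2]? = some yi ∧
              1 + Level a.1 = Level b.1 + yi)) ∧ (a.1, b.1) ∉ F)
          (a, i) (w, Y.length) := by
      intro a w L h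
      induction h with
      | nil a =>
        intro i hi hL
        have : Y.length ≤ i := by
          by_contra hlt
          have := congrArg List.length hL
          simp [List.length_drop] at this
          omega
        have : i = Y.length := le_antisymm hi this
        subst this
        exact Relation.ReflTransGen.refl
      | @cons_eq a b c l hR hpos _ ih =>
        intro i hi hL
        have h1 := hstep _ _ hR.1
        have h2 : Level b = Level a + 1 := by omega
        exact Relation.ReflTransGen.head (b := (b, i)) ⟨Or.inl ⟨rfl, hi, hR.1, h2⟩, hR.2⟩ (ih i hi hL)
      | @cons_pos a b c l hR hpos _ ih =>
        intro i hi hL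
        have hlt : i < Y.length := by
          by_contra hlt
          rw [List.drop_eq_nil_of_le (by omega)] at hL
          simp at hL
        rw [List.drop_eq_getElem_cons hlt, List.map_cons, List.cons.injEq] at hL
        obtain ⟨hL1, hL2⟩ := hL
        have hget : Y[i]? = some (Y[i]) := by
          rw [List.getElem?_eq_getElem hlt]
        have heq : 1 + Level a = Level b + Y[i] := by omega
        exact Relation.ReflTransGen.head (b := (b, i + 1)) ⟨Or.inr ⟨rfl, hR.1, Y[i], hget, heq⟩, hR.2⟩
          (ih (i + 1) hlt hL2)
    exact H a v _ h i hi rfl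
  · intro h
    have H : ∀ p : V × ℕ, Relation.ReflTransGen (fun a b : V × ℕ =>
          ((a.2 = b.2 ∧ b.2 ≤ Y.length ∧ E a.1 b.1 ∧ Level b.1 = Level a.1 + 1) ∨
           (b.2 = a.2 + 1 ∧ E a.1 b.1 ∧ ∃ yi : ℕ, Y[a.2]? = some yi ∧
              1 + Level a.1 = Level b.1 + yi)) ∧ (a.1, b.1) ∉ F)
          p (v, Y.length) →
        FWalk (fun a b => E a b ∧ (a, b) ∉ F) (fun a b => 1 + (Level a : ℤ) - Level b)
          p.1 v ((Y.drop p.2).map fun y : ℕ => (y : ℤ)) := by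
      intro p h
      induction h using Relation.ReflTransGen.head_induction_on with
      | refl => rw [List.drop_length, List.map_nil]; exact FWalk.nil v
      | @head x c hR h ih =>
        obtain ⟨h1 | h1, hF⟩ := hR
        · obtain ⟨he, _, hE, hL⟩ := h1
          refine FWalk.cons_eq ⟨hE, hF⟩ (by omega) ?_
          rw [he]
          exact ih
        · obtain ⟨he, hE, yi, hget, heq⟩ := h1
          have hlt : x.2 < Y.length := by
            by_contra hc
            rw [List.getElem?_eq_none (by omega)] at hget
            simp at hget
          rw [List.getElem?_eq_getElem hlt, Option.some.injEq] at hget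
          have hpos : 0 < yi := hY yi (hget ▸ Y.getElem_mem hlt)
          have hfeq : (1 + (Level x.1 : ℤ) - Level c.1) = yi := by omega
          have hl : (Y.drop x.2).map (fun y : ℕ => (y : ℤ)) =
              (1 + (Level x.1 : ℤ) - Level c.1) :: (Y.drop c.2).map (fun y : ℕ => (y : ℤ)) := by
            rw [List.drop_eq_getElem_cons hlt, List.map_cons, hget, hfeq, he]
          rw [hl]
          exact FWalk.cons_pos ⟨hE, hF⟩ (by omega) ih
    exact H (a, i) h

lemma cast_map_eq (Y : List ℕ) : (Y.map (fun y => (y : ℤ))) = Y.map (fun y : ℕ => (y : ℤ)) := by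
  induction Y with
  | nil => rfl
  | cons a l ih => simpa using ih

end Aux

/-- Layered-graph path correspondence: for a sequence `Y = (y_1, …, y_t)` of
positive integers, there is an `s`-`v` path `P` in `G - F` with `X⁺(P) = Y`
iff there is a path from `s⁰` to `vᵗ` in the layered graph `G_Y - φ⁻¹(F)`. -/
theorem stmt_15 {V : Type*} (E : V → V → Prop) (F : Set (V × V)) (s v : V)
    (Level : V → ℕ)
    (hLevel : ∀ u : V, IsLeast {n : ℕ | HasWalk E s u n} (Level u))
    (Y : List ℕ) (hY : ∀ y ∈ Y, 0 < y) :
    (∃ p : List V, IsWalkFrom (fun a b => E a b ∧ (a, b) ∉ F) s v p ∧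
        (((p.zip p.tail).map fun ab => 1 + (Level ab.1 : ℤ) - (Level ab.2 : ℤ)).filter
          fun y => decide (0 < y)) = Y.map (fun y => (y : ℤ)))
    ↔ (∃ q : List (V × ℕ), IsWalkFrom
        (fun a b =>
          ((a.2 = b.2 ∧ b.2 ≤ Y.length ∧ E a.1 b.1 ∧ Level b.1 = Level a.1 + 1) ∨
           (b.2 = a.2 + 1 ∧ E a.1 b.1 ∧ ∃ yi : ℕ, Y[a.2]? = some yi ∧
              1 + Level a.1 = Level b.1 + yi)) ∧ (a.1, b.1) ∉ F)
        (s, 0) (v, Y.length) q) := by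
  rw [cast_map_eq]
  have h1 := fwalk_iff (fun a b => E a b ∧ (a, b) ∉ F)
    (fun a b => 1 + (Level a : ℤ) - Level b) s v (Y.map (fun y : ℕ => (y : ℤ)))
  have h2 := layer_iff (F := F) (v := v) hLevel Y hY 0 (Nat.zero_le _) s
  rw [List.drop_zero] at h2
  have h3 := exists_isWalkFrom_iff (fun a b : V × ℕ =>
        ((a.2 = b.2 ∧ b.2 ≤ Y.length ∧ E a.1 b.1 ∧ Level b.1 = Level a.1 + 1) ∨
         (b.2 = a.2 + 1 ∧ E a.1 b.1 ∧ ∃ yi : ℕ, Y[a.2]? = some yi ∧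
            1 + Level a.1 = Level b.1 + yi)) ∧ (a.1, b.1) ∉ F)
      (s, 0) (v, Y.length)
  exact (h1.trans h2).trans h3.symm
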